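/- For ζ in the closed unit disk and 0 ≤ r < 1, the function g(λ) = φ_r(λ)/φ(λ), where φ(z) = z/(1 - conj(ζ)·z) and φ_r(z) = φ(rz), satisfies sup_{|λ|<1} |g(λ)| = r(1 + |ζ|)/(1 + r|ζ|), and this quantity is at most 2r/(1+r). -/

import Mathlib

open Complex Metric Real
open Filter Topology

lemma key_ineq (r s : ℝ) (hr0 : 0 ≤ r) (hr1 : r ≤ 1) (hs1 : s ≤ 1) (w : ℂ) (hw : ‖w‖ ≤ s) :
    ‖1 - w‖ * (1 + r * s) ≤ (1 + s) * ‖1 - (r : ℂ) * w‖ := by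
  have hs0 : 0 ≤ s := le_trans (norm_nonneg w) hw
  have h1 : 0 ≤ ‖1 - w‖ * (1 + r * s) := by positivity
  have h2 : 0 ≤ (1 + s) * ‖1 - (r : ℂ) * w‖ := by positivity
  rw [← Real.sqrt_sq h1, ← Real.sqrt_sq h2]
  apply Real.sqrt_le_sqrt
  set x := w.re
  set y := w.im
  set t := ‖w‖ with ht
  have ht0 : 0 ≤ t := norm_nonneg w
  have ht2 : y ^ 2 = t ^ 2 - x ^ 2 := by
    rw [ht, Complex.sq_norm]; simp [Complex.normSq_apply, x, y]; ring
  have hx : -x ≤ t := by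
    have := Complex.abs_re_le_norm w
    rw [abs_le] at this
    rw [ht]
    linarith [this.1]
  have hn1 : ‖1 - w‖ ^ 2 = (1 - x) ^ 2 + y ^ 2 := by
    rw [Complex.sq_norm]; simp [Complex.normSq_apply, x, y]; ring
  have hn2 : ‖1 - (r : ℂ) * w‖ ^ 2 = (1 - r * x) ^ 2 + r ^ 2 * y ^ 2 := by
    rw [Complex.sq_norm]; simp [Complex.normSq_apply, x, y]; ring
  have hrs : (0:ℝ) ≤ (1 + r*s)^2 - r*(1+s)^2 := by
    have heq : (1 + r*s)^2 - r*(1+s)^2 = (1 - r) * (1 - r*s^2) := by ring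
    rw [heq]
    have : r * s^2 ≤ 1 := by nlinarith
    nlinarith
  have decomp : (1+s)^2*((1-r*x)^2 + r^2*(t^2-x^2)) - ((1-x)^2+(t^2-x^2))*(1+r*s)^2 =
      (1-r)*(s-t)*((1+s)*(1+r*t)+(1+r*s)*(1+t)) + 2*(t+x)*((1+r*s)^2-r*(1+s)^2) := by
    ring
  have hA : 0 ≤ (1-r)*(s-t)*((1+s)*(1+r*t)+(1+r*s)*(1+t)) := by
    apply mul_nonneg (mul_nonneg (by linarith) (by linarith))
    positivity
  have hB : 0 ≤ 2*(t+x)*((1+r*s)^2-r*(1+s)^2) := by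
    apply mul_nonneg (by linarith) hrs
  calc (‖1 - w‖ * (1 + r * s)) ^ 2 = ((1-x)^2 + (t^2 - x^2)) * (1 + r*s)^2 := by
        rw [mul_pow, hn1, ht2]
    _ ≤ (1+s)^2 * ((1 - r*x)^2 + r^2*(t^2 - x^2)) := by linarith
    _ = ((1 + s) * ‖1 - (r:ℂ) * w‖) ^ 2 := by rw [mul_pow, hn2, ht2]

/-- For `ζ` in the closed unit disk and `0 ≤ r < 1`, the holomorphic extension
`g(λ) = r(1 - conj ζ · λ)/(1 - r · conj ζ · λ)` of `φ_r/φ`, where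
`φ(z) = z/(1 - conj ζ · z)` and `φ_r(z) = φ(rz)`, satisfies
`sup_{|λ|<1} |g(λ)| = r(1 + |ζ|)/(1 + r|ζ|) ≤ 2r/(1+r)`. -/
theorem stmt_1 (ζ : ℂ) (hζ : ζ ∈ closedBall (0 : ℂ) 1) (r : ℝ) (hr0 : 0 ≤ r) (hr1 : r < 1)
    (g : ℂ → ℂ)
    (hg : ∀ l : ℂ, l ∈ ball (0 : ℂ) 1 →
      g l = (r : ℂ) * (1 - (starRingEnd ℂ) ζ * l) / (1 - (r : ℂ) * (starRingEnd ℂ) ζ * l)) :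
    sSup ((fun l => ‖g l‖) '' ball (0 : ℂ) 1) = r * (1 + ‖ζ‖) / (1 + r * ‖ζ‖) ∧
      r * (1 + ‖ζ‖) / (1 + r * ‖ζ‖) ≤ 2 * r / (1 + r) := by
  have hs1 : ‖ζ‖ ≤ 1 := by simpa using hζ
  set s : ℝ := ‖ζ‖ with hsdef
  have hs0 : 0 ≤ s := norm_nonneg ζ
  set M : ℝ := r * (1 + s) / (1 + r * s) with hM
  have hden : (0:ℝ) < 1 + r * s := by positivity
  have hM0 : 0 ≤ M := by positivity
  -- upper bound
  have hub : ∀ l ∈ ball (0 : ℂ) 1, ‖g l‖ ≤ M := by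
    intro l hl
    have hl' : ‖l‖ < 1 := by rwa [mem_ball_zero_iff] at hl
    rw [hg l hl, mul_assoc (r:ℂ)]
    set w : ℂ := (starRingEnd ℂ) ζ * l with hw
    have hwnorm : ‖w‖ ≤ s := by
      rw [hw, norm_mul, RCLike.norm_conj]
      calc s * ‖l‖ ≤ s * 1 := mul_le_mul_of_nonneg_left hl'.le hs0
        _ = s := mul_one s
    have hrw : ‖(r:ℂ) * w‖ < 1 := by
      rw [norm_mul, Complex.norm_real, Real.norm_eq_abs, _root_.abs_of_nonneg hr0]
      calc r * ‖w‖ ≤ r * 1 := mul_le_mul_of_nonneg_left (le_trans hwnorm hs1) hr0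
        _ < 1 := by linarith
    have hne : (1 : ℂ) - (r:ℂ) * w ≠ 0 := by
      intro h
      rw [sub_eq_zero] at h
      rw [← h] at hrw
      simp at hrw
    have hpos : (0:ℝ) < ‖(1:ℂ) - (r:ℂ)*w‖ := norm_pos_iff.mpr hne
    have key := key_ineq r s hr0 hr1.le hs1 w hwnorm
    rw [norm_div, norm_mul, Complex.norm_real, Real.norm_eq_abs, _root_.abs_of_nonneg hr0,
      hM, div_le_div_iff₀ hpos hden]
    nlinarith [mul_le_mul_of_nonneg_left key hr0]
  have hbdd : BddAbove ((fun l => ‖g l‖) '' ball (0 : ℂ) 1) :=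
    ⟨M, by rintro y ⟨l, hl, rfl⟩; exact hub l hl⟩
  constructor
  · apply le_antisymm
    · apply Real.sSup_le _ hM0
      rintro y ⟨l, hl, rfl⟩
      exact hub l hl
    · -- lower bound
      rcases eq_or_lt_of_le hs0 with hs | hs
      · -- s = 0
        have hMr : M = r := by rw [hM, ← hs]; simp
        rw [hMr]
        have h0 : (0:ℂ) ∈ ball (0:ℂ) 1 := by simp
        have hg0 : ‖g 0‖ = r := by
          rw [hg 0 h0]; simp [Complex.norm_real, _root_.abs_of_nonneg hr0]
        calc r = ‖g 0‖ := hg0.symm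
          _ ≤ sSup ((fun l => ‖g l‖) '' ball (0 : ℂ) 1) := le_csSup hbdd ⟨0, h0, rfl⟩
      · -- s > 0
        set f : ℝ → ℝ := fun t => r * (1 + t * s) / (1 + r * (t * s)) with hf
        have htend : Tendsto f (𝓝[<] (1:ℝ)) (𝓝 M) := by
          have hc : ContinuousAt f 1 := by
            apply ContinuousAt.div
            · fun_prop
            · fun_prop
            · simp only [one_mul]; positivity
          have : f 1 = M := by rw [hf, hM]; simp [mul_assoc]
          rw [← this]
          exact hc.tendsto.mono_left nhdsWithin_le_nhds
        apply le_of_tendsto htend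
        filter_upwards [Ioo_mem_nhdsLT_of_mem (by norm_num : (1:ℝ) ∈ Set.Ioc 0 1)]
          with t htIoo
        obtain ⟨ht0, ht1⟩ := htIoo
        set μ : ℂ := -(((t/s : ℝ) : ℂ) * ζ) with hμ
        have hμmem : μ ∈ ball (0:ℂ) 1 := by
          rw [mem_ball_zero_iff, hμ, norm_neg, norm_mul, Complex.norm_real,
            Real.norm_eq_abs, _root_.abs_of_nonneg (by positivity : (0:ℝ) ≤ t/s)]
          rw [← hsdef, div_mul_cancel₀ t (ne_of_gt hs)]
          exact ht1
        have hconj : (starRingEnd ℂ) ζ * μ = ((-(t*s) : ℝ) : ℂ) := by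
          rw [hμ]
          have : (starRingEnd ℂ) ζ * -(((t/s : ℝ) : ℂ) * ζ) =
              -(((t/s : ℝ) : ℂ) * ((starRingEnd ℂ) ζ * ζ)) := by ring
          rw [this, Complex.conj_mul', ← hsdef]
          have hcr : -(t/s * s^2) = -(t*s) := by
            field_simp
          norm_cast
        have hdt : (0:ℝ) < 1 + r * (t * s) := by positivity
        have hgm : g μ = ((f t : ℝ) : ℂ) := by
          rw [hg μ hμmem, mul_assoc (r:ℂ), hconj, hf]
          have hne : ((1 + r * (t*s) : ℝ) : ℂ) ≠ 0 := by
            exact_mod_cast ne_of_gt hdt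
          push_cast at hne ⊢
          field_simp
          ring
        have hft0 : 0 ≤ f t := by rw [hf]; positivity
        have hnorm : ‖g μ‖ = f t := by
          rw [hgm, Complex.norm_real, Real.norm_eq_abs]
          exact _root_.abs_of_nonneg hft0
        calc f t = ‖g μ‖ := hnorm.symm
          _ ≤ sSup ((fun l => ‖g l‖) '' ball (0 : ℂ) 1) := le_csSup hbdd ⟨μ, hμmem, rfl⟩
  · rw [div_le_div_iff₀ hden (by linarith : (0:ℝ) < 1 + r)]
    nlinarith [mul_nonneg (mul_nonneg hr0 (by linarith : (0:ℝ) ≤ 1 - r))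
      (by linarith : (0:ℝ) ≤ 1 - s)]
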